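/- In a symmetric enhanced Leibniz algebra, the default of the operation ∗ to be an action is governed by the anomaly: for all v₁, v₂ ∈ V and w ∈ W, v₁ ∗ (v₂ ∗ w) − v₂ ∗ (v₁ ∗ w) − {v₁,v₂} ∗ w = γ(v₁, v₂, t(w)). -/
import Mathlib


/-- The operation `v ∗ w := t(w) ∘ v` of an enhanced Leibniz algebra. -/
def elaStar {K V W : Type*} [Field K] [AddCommGroup V] [Module K V]
    [AddCommGroup W] [Module K W]
    (t : W →ₗ[K] V) (c : V →ₗ[K] V →ₗ[K] W) (v : V) (w : W) : W :=
  c (t w) v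

/-- The antisymmetrized bracket `{v₁,v₂} := [v₁,v₂] − t(v₁ ∘ v₂)`. -/
def elaBrace {K V W : Type*} [Field K] [AddCommGroup V] [Module K V]
    [AddCommGroup W] [Module K W]
    (t : W →ₗ[K] V) (br : V →ₗ[K] V →ₗ[K] V) (c : V →ₗ[K] V →ₗ[K] W)
    (v₁ v₂ : V) : V :=
  br v₁ v₂ - t (c v₁ v₂)

/-- The anomaly `γ` of an enhanced Leibniz algebra. -/
def elaGamma {K V W : Type*} [Field K] [AddCommGroup V] [Module K V]
    [AddCommGroup W] [Module K W]
    (t : W →ₗ[K] V) (br : V →ₗ[K] V →ₗ[K] V) (c : V →ₗ[K] V →ₗ[K] W)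
    (v₁ v₂ v₃ : V) : W :=
  - c v₁ (br v₂ v₃) + c (br v₁ v₂) v₃ + c v₂ (br v₁ v₃)
    - c (t (c v₂ v₃)) v₁ - c (t (c v₁ v₂)) v₃ + c (t (c v₁ v₃)) v₂

/-- In a symmetric enhanced Leibniz algebra, the default of `∗` to be an action is
governed by the anomaly. -/
theorem sela_star_action_anomaly
    {K : Type*} [Field K] (h2 : (2 : K) ≠ 0)
    {V W : Type*} [AddCommGroup V] [Module K V] [AddCommGroup W] [Module K W]
    (t : W →ₗ[K] V) (br : V →ₗ[K] V →ₗ[K] V) (c : V →ₗ[K] V →ₗ[K] W)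
    (leib : ∀ v₁ v₂ v₃ : V, br v₁ (br v₂ v₃) = br (br v₁ v₂) v₃ + br v₂ (br v₁ v₃))
    (axa : ∀ (w : W) (v : V), br (t w) v = 0)
    (axb : ∀ w : W, c (t w) (t w) = 0)
    (axc : ∀ u v : V, c u (br v v) = c v (br u v))
    (axd : ∀ v : V, br v v = t (c v v))
    (hsym : ∀ u v : V, c u v = c v u) :
    ∀ (v₁ v₂ : V) (w : W),
      elaStar t c v₁ (elaStar t c v₂ w) - elaStar t c v₂ (elaStar t c v₁ w)
        - elaStar t c (elaBrace t br c v₁ v₂) w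
      = elaGamma t br c v₁ v₂ (t w) := by
  have half : ∀ x : W, x + x = 0 → x = 0 := by
    intro x hx
    have h2x : (2 : K) • x = 0 := by rw [two_smul]; exact hx
    rcases smul_eq_zero.mp h2x with h | h
    · exact absurd h h2
    · exact h
  have tw0 : ∀ w₁ w₂ : W, c (t w₁) (t w₂) = 0 := by
    intro w₁ w₂
    have h := axb (w₁ + w₂)
    simp only [map_add, LinearMap.add_apply] at h
    rw [axb, axb, hsym (t w₂) (t w₁)] at h
    apply half
    calc c (t w₁) (t w₂) + c (t w₁) (t w₂)
        = 0 + c (t w₁) (t w₂) + (c (t w₁) (t w₂) + 0) := by abel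
      _ = 0 := h
  have keyd : ∀ u v : V, br u v + br v u = t (c u v) + t (c u v) := by
    intro u v
    have h := axd (u + v)
    simp only [map_add, LinearMap.add_apply] at h
    rw [hsym v u] at h
    have e1 : br u v + br v u + (t (c u u) + t (c v v))
        = t (c u v) + t (c u v) + (t (c u u) + t (c v v)) := by
      calc br u v + br v u + (t (c u u) + t (c v v))
          = br u u + br v u + (br u v + br v v) := by rw [axd u, axd v]; abel
        _ = t (c u u) + t (c u v) + (t (c u v) + t (c v v)) := h
        _ = t (c u v) + t (c u v) + (t (c u u) + t (c v v)) := by abel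
    exact add_right_cancel e1
  have key3 : ∀ (v : V) (w : W), br v (t w) = t (c v (t w)) + t (c v (t w)) := by
    intro v w
    have h := keyd v (t w)
    rwa [axa w v, add_zero] at h
  have keyc : ∀ u v v' : V, c u (br v v') + c u (br v' v)
      = c v (br u v') + c v' (br u v) := by
    intro u v v'
    have h := axc u (v + v')
    simp only [map_add, LinearMap.add_apply] at h
    rw [axc u v, axc u v'] at h
    have e1 : c u (br v v') + c u (br v' v) + (c v (br u v) + c v' (br u v'))
        = c v (br u v') + c v' (br u v) + (c v (br u v) + c v' (br u v')) := by
      calc c u (br v v') + c u (br v' v) + (c v (br u v) + c v' (br u v'))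
          = c v (br u v) + c u (br v' v) + (c u (br v v') + c v' (br u v')) := by
            abel
        _ = c v (br u v) + c v' (br u v) + (c v (br u v') + c v' (br u v')) := h
        _ = c v (br u v') + c v' (br u v) + (c v (br u v) + c v' (br u v')) := by
            abel
    exact add_right_cancel e1
  have key5 : ∀ (v₁ v₂ : V) (w : W), c (t w) (br v₁ v₂)
      = c v₁ (t (c v₂ (t w))) + c v₁ (t (c v₂ (t w)))
        - (c v₂ (t (c v₁ (t w))) + c v₂ (t (c v₁ (t w)))) := by
    intro v₁ v₂ w
    have h := keyc v₁ v₂ (t w)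
    rw [axa w v₂, map_zero, add_zero, key3 v₂ w, key3 v₁ w, map_add, map_add] at h
    rw [h]
    abel
  intro v₁ v₂ w
  simp only [elaStar, elaBrace, elaGamma, map_sub, LinearMap.sub_apply]
  rw [hsym (t w) v₂, hsym (t w) v₁, hsym (br v₁ v₂) (t w), key5 v₁ v₂ w,
    tw0 w (c v₁ v₂), tw0 (c v₁ v₂) w, key3 v₂ w, key3 v₁ w, map_add, map_add,
    hsym (t (c v₂ (t w))) v₁, hsym (t (c v₁ (t w))) v₂]
  abel
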